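/- Effectively unconstrained vertices belong to no Minimal Inconsistent Core: Let (V,E,σ) be an influence graph with input set I and μ : V → {+,−} a partial vertex labeling, and let i ∈ V be a non-input vertex satisfying at least one of the following conditions: (1) (i,i) ∈ E and σ(i,i) = +; (2) there is an edge (j,i) ∈ E with σ(j,i) undefined; (3) there are edges (j,i), (k,i) ∈ E with σ(j,i), σ(k,i), μ(j), μ(k) all defined, μ(j)·σ(j,i) = + and μ(k)·σ(k,i) = −; (4) μ(i) is defined and there is an edge (j,i) ∈ E with σ(j,i) and μ(j) defined and μ(j)·σ(j,i) = μ(i); (5) μ(i) is undefined, every k with (i,k) ∈ E is an input, and there is at least one edge (j,i) ∈ E; (6) there is an edge (j,i) ∈ E where μ(j) is undefined, j is an input, and every k ≠ i with (j,k) ∈ E is an input. Then no Minimal Inconsistent Core W ⊆ V contains i. -/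

import Mathlib

/-- Sign multiplication: `true` stands for `+` and `false` for `−`
(`+·+ = −·− = +`, `+·− = −·+ = −`). -/
def signMul (a b : Bool) : Bool := a == b

/-- `σ'` and `μ'` are witnessing labelings for `W` in the influence graph with
vertex type `V`, edges `E`, partial edge labeling `σ`, partial vertex labeling `μ`,
and input vertices `I`: they are total, extend `σ` and `μ`, and for every
non-input vertex `i ∈ W` there is an edge `(j, i) ∈ E` with
`μ' i = μ' j · σ' (j, i)`. -/
def Witnessing {V : Type} (E : Set (V × V)) (σ : V × V → Option Bool)
    (μ : V → Option Bool) (I : Set V) (W : Set V)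
    (σ' : V × V → Bool) (μ' : V → Bool) : Prop :=
  (∀ e s, σ e = some s → σ' e = s) ∧
  (∀ i s, μ i = some s → μ' i = s) ∧
  (∀ i ∈ W, i ∉ I → ∃ j, (j, i) ∈ E ∧ μ' i = signMul (μ' j) (σ' (j, i)))

/-- The influence graph `(V, E, σ)` with inputs `I` and the partial vertex
labeling `μ` are consistent: there are witnessing labelings for all of `V`. -/
def Consistent {V : Type} (E : Set (V × V)) (σ : V × V → Option Bool)
    (μ : V → Option Bool) (I : Set V) : Prop :=
  ∃ σ' μ', Witnessing E σ μ I Set.univ σ' μ'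

/-- `W` is a Minimal Inconsistent Core: there are no witnessing labelings for `W`,
but every proper subset of `W` has witnessing labelings. -/
def IsMIC {V : Type} (E : Set (V × V)) (σ : V × V → Option Bool)
    (μ : V → Option Bool) (I : Set V) (W : Set V) : Prop :=
  (¬ ∃ σ' μ', Witnessing E σ μ I W σ' μ') ∧
  (∀ W', W' ⊂ W → ∃ σ' μ', Witnessing E σ μ I W' σ' μ')

/-- Effectively unconstrained vertices belong to no Minimal Inconsistent Core:
if a non-input vertex `i` satisfies one of the six input-reduction conditions,
then no MIC contains `i`. -/
theorem unconstrained_not_in_mic {V : Type} [Fintype V]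
    (E : Set (V × V)) (σ : V × V → Option Bool) (μ : V → Option Bool) (I : Set V)
    (hσ : ∀ e, σ e ≠ none → e ∈ E)
    (i : V) (hi : i ∉ I)
    (hcond :
      ((i, i) ∈ E ∧ σ (i, i) = some true) ∨
      (∃ j, (j, i) ∈ E ∧ σ (j, i) = none) ∨
      (∃ j k sj sk tj tk, (j, i) ∈ E ∧ (k, i) ∈ E ∧
        σ (j, i) = some sj ∧ μ j = some tj ∧
        σ (k, i) = some sk ∧ μ k = some tk ∧
        signMul tj sj = true ∧ signMul tk sk = false) ∨
      (∃ r, μ i = some r ∧ ∃ j s t, (j, i) ∈ E ∧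
        σ (j, i) = some s ∧ μ j = some t ∧ signMul t s = r) ∨
      (μ i = none ∧ (∀ k, (i, k) ∈ E → k ∈ I) ∧ ∃ j, (j, i) ∈ E) ∨
      (∃ j, (j, i) ∈ E ∧ μ j = none ∧ j ∈ I ∧
        ∀ k, k ≠ i → (j, k) ∈ E → k ∈ I)) :
    ∀ W : Set V, IsMIC E σ μ I W → i ∉ W := by
  classical
  intro W hW hiW
  obtain ⟨hno, hmin⟩ := hW
  have hsub : W \ {i} ⊂ W := Set.sdiff_singleton_ssubset.mpr hiW
  obtain ⟨σ', μ', hσe, hμe, hwit⟩ := hmin _ hsub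
  apply hno
  rcases hcond with ⟨hE, hs⟩ | ⟨j, hE, hs⟩ |
      ⟨j, k, sj, sk, tj, tk, hjE, hkE, hsj, htj, hsk, htk, h1, h2⟩ |
      ⟨r, hr, j, s, t, hE, hs, ht, hst⟩ | ⟨hμi, hIk, j, hE⟩ | ⟨j, hE, hμj, hjI, hk⟩
  · -- case 1: positive self-loop
    refine ⟨σ', μ', hσe, hμe, fun v hv hvI => ?_⟩
    by_cases hvi : v = i
    · subst hvi
      have hss : σ' (v, v) = true := hσe _ _ hs
      exact ⟨v, hE, by simp [hss, signMul]⟩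
    · exact hwit v ⟨hv, hvi⟩ hvI
  · -- case 2: unlabeled incoming edge
    refine ⟨Function.update σ' (j, i) (μ' j == μ' i), μ', ?_, hμe, ?_⟩
    · intro e se he
      have hne : e ≠ (j, i) := by rintro rfl; rw [hs] at he; exact Option.some_ne_none _ he.symm
      rw [Function.update_of_ne hne]; exact hσe e se he
    · intro v hv hvI
      by_cases hvi : v = i
      · subst hvi
        refine ⟨j, hE, ?_⟩
        rw [Function.update_self]
        cases μ' j <;> cases μ' v <;> rfl
      · obtain ⟨j', hE', heq⟩ := hwit v ⟨hv, hvi⟩ hvI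
        refine ⟨j', hE', ?_⟩
        rw [Function.update_of_ne (by rintro h; exact hvi (congrArg Prod.snd h))]
        exact heq
  · -- case 3: both signs achievable
    refine ⟨σ', μ', hσe, hμe, fun v hv hvI => ?_⟩
    by_cases hvi : v = i
    · subst hvi
      have hj : signMul (μ' j) (σ' (j, v)) = true := by
        rw [hσe _ _ hsj, hμe _ _ htj]; exact h1
      have hk' : signMul (μ' k) (σ' (k, v)) = false := by
        rw [hσe _ _ hsk, hμe _ _ htk]; exact h2
      rcases Bool.eq_false_or_eq_true (μ' v) with hv' | hv'
      · exact ⟨j, hjE, by rw [hv', hj]⟩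
      · exact ⟨k, hkE, by rw [hv', hk']⟩
    · exact hwit v ⟨hv, hvi⟩ hvI
  · -- case 4: incoming edge agreeing with μ i
    refine ⟨σ', μ', hσe, hμe, fun v hv hvI => ?_⟩
    by_cases hvi : v = i
    · subst hvi
      refine ⟨j, hE, ?_⟩
      rw [hσe _ _ hs, hμe _ _ ht, hst, hμe _ _ hr]
    · exact hwit v ⟨hv, hvi⟩ hvI
  · -- case 5: μ i undefined, all successors inputs
    have hji : j ≠ i := by
      rintro rfl; exact hi (hIk _ hE)
    refine ⟨σ', Function.update μ' i (signMul (μ' j) (σ' (j, i))), hσe, ?_, ?_⟩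
    · intro v sv hv
      have hne : v ≠ i := by rintro rfl; rw [hμi] at hv; exact Option.some_ne_none _ hv.symm
      rw [Function.update_of_ne hne]; exact hμe v sv hv
    · intro v hv hvI
      by_cases hvi : v = i
      · subst hvi
        exact ⟨j, hE, by rw [Function.update_self, Function.update_of_ne hji]⟩
      · obtain ⟨j', hE', heq⟩ := hwit v ⟨hv, hvi⟩ hvI
        have hj'i : j' ≠ i := by rintro rfl; exact hvI (hIk v hE')
        refine ⟨j', hE', ?_⟩
        rw [Function.update_of_ne hvi, Function.update_of_ne hj'i]
        exact heq
  · -- case 6: unlabeled input source with only input other targets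
    have hij : i ≠ j := by rintro rfl; exact hi hjI
    refine ⟨σ', Function.update μ' j (μ' i == σ' (j, i)), hσe, ?_, ?_⟩
    · intro v sv hv
      have hne : v ≠ j := by rintro rfl; rw [hμj] at hv; exact Option.some_ne_none _ hv.symm
      rw [Function.update_of_ne hne]; exact hμe v sv hv
    · intro v hv hvI
      by_cases hvi : v = i
      · subst hvi
        refine ⟨j, hE, ?_⟩
        rw [Function.update_of_ne hij, Function.update_self]
        cases μ' v <;> cases σ' (j, v) <;> rfl
      · obtain ⟨j', hE', heq⟩ := hwit v ⟨hv, hvi⟩ hvI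
        have hvj : v ≠ j := by rintro rfl; exact hvI hjI
        have hj'j : j' ≠ j := by rintro rfl; exact hvI (hk v hvi hE')
        refine ⟨j', hE', ?_⟩
        rw [Function.update_of_ne hvj, Function.update_of_ne hj'j]
        exact heq
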